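/- Define ϱ₀ on ℝ³ by letting its unit ball be the convex hull of the eight points (±1,±1,±1) together with the Euclidean ball of radius √2, and set ϱ(r,s,t) = (|r|+|s|)/4 + ϱ₀(r,s,t)/2. Then ϱ satisfies (|r|+|s|)/2 ≤ ϱ(r,s,t) ≤ max{|r|,|s|,|t|} and ϱ(r',s,t) ≥ ϱ(r,s,t) + (r'−r)/4 for r,s,t > 0 and 0 < r < r'. -/

import Mathlib

/-- `ϱ₀` is the Minkowski gauge of the convex hull of the eight points `(±1,±1,±1)`
together with the Euclidean ball of radius `√2` in `ℝ³`. -/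
noncomputable def rho0 : EuclideanSpace ℝ (Fin 3) → ℝ :=
  gauge (convexHull ℝ
    ({v : EuclideanSpace ℝ (Fin 3) | ∀ i, |v i| = 1}
      ∪ Metric.closedBall (0 : EuclideanSpace ℝ (Fin 3)) (Real.sqrt 2)))

/-- `ϱ(r,s,t) = (|r|+|s|)/4 + ϱ₀(r,s,t)/2`. -/
noncomputable def rho (v : EuclideanSpace ℝ (Fin 3)) : ℝ :=
  (|v 0| + |v 1|) / 4 + rho0 v / 2

namespace Stmt5Aux

open Set Metric

abbrev E3 := EuclideanSpace ℝ (Fin 3)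

noncomputable def Sset : Set E3 :=
  {v : E3 | ∀ i, |v i| = 1} ∪ Metric.closedBall (0 : E3) (Real.sqrt 2)

noncomputable def Cset : Set E3 := convexHull ℝ Sset

lemma rho0_eq (v : E3) : rho0 v = gauge Cset v := rfl

lemma hC_convex : Convex ℝ Cset := convex_convexHull ℝ _

lemma sqrt2_pos : (0:ℝ) < Real.sqrt 2 := Real.sqrt_pos.mpr two_pos

lemma ball_subset_C : Metric.closedBall (0 : E3) (Real.sqrt 2) ⊆ Cset :=
  (Set.subset_union_right).trans (subset_convexHull ℝ _)

lemma hC_absorbent : Absorbent ℝ Cset :=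
  (absorbent_ball_zero sqrt2_pos).mono
    (Metric.ball_subset_closedBall.trans ball_subset_C)

/-- The diamond-type upper bound set. -/
lemma hC_subset_K : Cset ⊆ {v : E3 | |v 0| + |v 1| ≤ 2} := by
  apply convexHull_min
  · rintro v (hv | hv)
    · have h0 := hv 0; have h1 := hv 1
      simp only [Set.mem_setOf_eq, h0, h1]; norm_num
    · have hn : ‖v‖ ≤ Real.sqrt 2 := by simpa using hv
      have hsq : ‖v‖ ^ 2 ≤ 2 := by
        nlinarith [norm_nonneg v, Real.sq_sqrt (by norm_num : (2:ℝ) ≥ 0)]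
      have hnormsq : ‖v‖ ^ 2 = (v 0) ^ 2 + (v 1) ^ 2 + (v 2) ^ 2 := by
        rw [EuclideanSpace.norm_eq]
        rw [Real.sq_sqrt (by positivity)]
        simp [Fin.sum_univ_three, Real.norm_eq_abs, sq_abs]
      have key : (v 0) ^ 2 + (v 1) ^ 2 ≤ 2 := by nlinarith [sq_nonneg (v 2)]
      have habs : (|v 0| + |v 1|) ^ 2 ≤ 4 := by
        nlinarith [sq_abs (v 0), sq_abs (v 1), sq_nonneg (|v 0| - |v 1|)]
      have : (0:ℝ) ≤ |v 0| + |v 1| := by positivity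
      simp only [Set.mem_setOf_eq]
      nlinarith
  · intro x hx y hy a b ha hb hab
    simp only [Set.mem_setOf_eq] at hx hy ⊢
    have e0 : (a • x + b • y) 0 = a * x 0 + b * y 0 := rfl
    have e1 : (a • x + b • y) 1 = a * x 1 + b * y 1 := rfl
    have h0 : |a * x 0 + b * y 0| ≤ a * |x 0| + b * |y 0| := by
      calc |a * x 0 + b * y 0| ≤ |a * x 0| + |b * y 0| := abs_add_le _ _
        _ = a * |x 0| + b * |y 0| := by
          rw [abs_mul, abs_mul, abs_of_nonneg ha, abs_of_nonneg hb]
    have h1 : |a * x 1 + b * y 1| ≤ a * |x 1| + b * |y 1| := by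
      calc |a * x 1 + b * y 1| ≤ |a * x 1| + |b * y 1| := abs_add_le _ _
        _ = a * |x 1| + b * |y 1| := by
          rw [abs_mul, abs_mul, abs_of_nonneg ha, abs_of_nonneg hb]
    rw [e0, e1]
    nlinarith

lemma gauge_lower (v : E3) : (|v 0| + |v 1|) / 2 ≤ gauge Cset v := by
  rw [gauge]
  apply le_csInf hC_absorbent.gauge_set_nonempty
  rintro r ⟨hr, c, hc, hrc⟩
  have hcK := hC_subset_K hc
  simp only [Set.mem_setOf_eq] at hcK
  have h0 : v 0 = r * c 0 := by rw [← hrc]; rfl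
  have h1 : v 1 = r * c 1 := by rw [← hrc]; rfl
  have : |v 0| + |v 1| ≤ 2 * r := by
    rw [h0, h1, abs_mul, abs_mul, abs_of_pos hr]
    calc r * |c 0| + r * |c 1| = r * (|c 0| + |c 1|) := by ring
      _ ≤ r * 2 := by nlinarith
      _ = 2 * r := by ring
  linarith

lemma mem_C_combo {x y v : E3} (hx : x ∈ Cset) (hy : y ∈ Cset) {a b : ℝ}
    (ha : 0 ≤ a) (hb : 0 ≤ b) (hab : a + b = 1) (h : v = a • x + b • y) : v ∈ Cset :=
  h ▸ hC_convex hx hy ha hb hab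

lemma corner_mem (s0 s1 s2 : ℝ) (h0 : |s0| = 1) (h1 : |s1| = 1) (h2 : |s2| = 1) :
    (WithLp.toLp 2 ![s0, s1, s2] : E3) ∈ Cset := by
  apply subset_convexHull ℝ Sset
  left
  intro i
  fin_cases i <;> simpa

lemma L1 (s0 s1 : ℝ) (h0 : |s0| = 1) (h1 : |s1| = 1) (c : ℝ) (hc : |c| ≤ 1) :
    (WithLp.toLp 2 ![s0, s1, c] : E3) ∈ Cset := by
  obtain ⟨hc1, hc2⟩ := abs_le.1 hc
  refine mem_C_combo (corner_mem s0 s1 1 h0 h1 (by norm_num))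
    (corner_mem s0 s1 (-1) h0 h1 (by norm_num))
    (a := (1 + c) / 2) (b := (1 - c) / 2) (by linarith) (by linarith) (by ring) ?_
  ext i
  fin_cases i
  · show s0 = (1 + c) / 2 * s0 + (1 - c) / 2 * s0; ring
  · show s1 = (1 + c) / 2 * s1 + (1 - c) / 2 * s1; ring
  · show c = (1 + c) / 2 * 1 + (1 - c) / 2 * (-1); ring

lemma L2 (s0 : ℝ) (h0 : |s0| = 1) (c1 c2 : ℝ) (h1 : |c1| ≤ 1) (h2 : |c2| ≤ 1) :
    (WithLp.toLp 2 ![s0, c1, c2] : E3) ∈ Cset := by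
  obtain ⟨ha1, ha2⟩ := abs_le.1 h1
  refine mem_C_combo (L1 s0 1 h0 (by norm_num) c2 h2)
    (L1 s0 (-1) h0 (by norm_num) c2 h2)
    (a := (1 + c1) / 2) (b := (1 - c1) / 2) (by linarith) (by linarith) (by ring) ?_
  ext i
  fin_cases i
  · show s0 = (1 + c1) / 2 * s0 + (1 - c1) / 2 * s0; ring
  · show c1 = (1 + c1) / 2 * 1 + (1 - c1) / 2 * (-1); ring
  · show c2 = (1 + c1) / 2 * c2 + (1 - c1) / 2 * c2; ring

lemma L3 (c0 c1 c2 : ℝ) (h0 : |c0| ≤ 1) (h1 : |c1| ≤ 1) (h2 : |c2| ≤ 1) :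
    (WithLp.toLp 2 ![c0, c1, c2] : E3) ∈ Cset := by
  obtain ⟨ha1, ha2⟩ := abs_le.1 h0
  refine mem_C_combo (L2 1 (by norm_num) c1 c2 h1 h2)
    (L2 (-1) (by norm_num) c1 c2 h1 h2)
    (a := (1 + c0) / 2) (b := (1 - c0) / 2) (by linarith) (by linarith) (by ring) ?_
  ext i
  fin_cases i
  · show c0 = (1 + c0) / 2 * 1 + (1 - c0) / 2 * (-1); ring
  · show c1 = (1 + c0) / 2 * c1 + (1 - c0) / 2 * c1; ring
  · show c2 = (1 + c0) / 2 * c2 + (1 - c0) / 2 * c2; ring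

lemma cube_mem (v : E3) (h : ∀ i, |v i| ≤ 1) : v ∈ Cset := by
  have hv : v = WithLp.toLp 2 ![v 0, v 1, v 2] := by
    ext i; fin_cases i <;> rfl
  rw [hv]
  exact L3 _ _ _ (h 0) (h 1) (h 2)

lemma gauge_upper (v : E3) : gauge Cset v ≤ max (max |v 0| |v 1|) |v 2| := by
  set M := max (max |v 0| |v 1|) |v 2| with hM
  have hM0 : 0 ≤ M := le_trans (abs_nonneg _) (le_max_right _ _)
  have hvi : ∀ i, |v i| ≤ M := by
    intro i
    fin_cases i
    · exact le_trans (le_max_left _ _) (le_max_left _ _)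
    · exact le_trans (le_max_right _ _) (le_max_left _ _)
    · exact le_max_right _ _
  rcases eq_or_lt_of_le hM0 with hM0' | hM0'
  · have hv0 : v = 0 := by
      ext i
      have := hvi i
      rw [← hM0'] at this
      have := abs_nonneg (v i)
      have : |v i| = 0 := le_antisymm ‹|v i| ≤ 0› (abs_nonneg _)
      simpa [abs_eq_zero] using this
    rw [hv0]
    simpa using hM0
  · apply gauge_le_of_mem hM0
    refine ⟨M⁻¹ • v, cube_mem _ ?_, ?_⟩
    · intro i
      have : (M⁻¹ • v) i = M⁻¹ * v i := rfl
      rw [this, abs_mul, abs_of_pos (inv_pos.2 hM0')]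
      rw [inv_mul_le_iff₀ hM0', mul_one]
      exact hvi i
    · show M • (M⁻¹ • v) = v
      rw [smul_smul, mul_inv_cancel₀ (ne_of_gt hM0'), one_smul]

noncomputable def flip : E3 ≃ₗᵢ[ℝ] E3 :=
  LinearIsometryEquiv.piLpCongrRight 2
    (fun i => if i = 0 then LinearIsometryEquiv.neg ℝ else LinearIsometryEquiv.refl ℝ ℝ)

lemma flip_apply_zero (v : E3) : flip v 0 = -(v 0) := rfl

lemma flip_apply_one (v : E3) : flip v 1 = v 1 := rfl

lemma flip_apply_two (v : E3) : flip v 2 = v 2 := rfl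

lemma flip_abs (v : E3) (i : Fin 3) : |flip v i| = |v i| := by
  fin_cases i
  · show |(-(v 0))| = |v 0|; rw [abs_neg]
  · rfl
  · rfl

lemma flip_mem_S {v : E3} (hv : v ∈ Sset) : flip v ∈ Sset := by
  rcases hv with hv | hv
  · left; intro i; rw [flip_abs]; exact hv i
  · right
    simp only [Metric.mem_closedBall, dist_zero_right] at hv ⊢
    rwa [flip.norm_map]

lemma flip_flip (v : E3) : flip (flip v) = v := by
  ext i
  fin_cases i
  · show -(-(v 0)) = v 0; rw [neg_neg]
  · rfl
  · rfl

lemma flip_image_S : flip '' Sset = Sset := by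
  apply Set.Subset.antisymm
  · rintro _ ⟨v, hv, rfl⟩; exact flip_mem_S hv
  · intro v hv
    exact ⟨flip v, flip_mem_S hv, flip_flip v⟩

lemma flip_mem_C {v : E3} (hv : v ∈ Cset) : flip v ∈ Cset := by
  have hlin : IsLinearMap ℝ (flip : E3 → E3) := ⟨flip.map_add, flip.map_smul⟩
  have : flip '' Cset = Cset := by
    rw [Cset, hlin.image_convexHull, flip_image_S]
  rw [← this]
  exact ⟨v, hv, rfl⟩

lemma gauge_flip (v : E3) : gauge Cset (flip v) = gauge Cset v := by
  rw [gauge, gauge]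
  congr 1
  ext r
  simp only [Set.mem_setOf_eq, and_congr_right_iff]
  intro hr
  constructor
  · rintro ⟨c, hc, hrc⟩
    refine ⟨flip c, flip_mem_C hc, ?_⟩
    have hrc' : r • c = flip v := hrc
    show r • flip c = v
    rw [← flip.map_smul, hrc', flip_flip]
  · rintro ⟨c, hc, hrc⟩
    have hrc' : r • c = v := hrc
    exact ⟨flip c, flip_mem_C hc, by show r • flip c = flip v; rw [← flip.map_smul, hrc']⟩

lemma gauge_C_mono (y y' : E3) (h1 : y 1 = y' 1) (h2 : y 2 = y' 2)
    (hr : 0 < y 0) (hrr : y 0 < y' 0) : gauge Cset y ≤ gauge Cset y' := by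
  have hr' : 0 < y' 0 := lt_trans hr hrr
  have hne : y' 0 ≠ 0 := ne_of_gt hr'
  set a : ℝ := (y' 0 + y 0) / (2 * y' 0) with ha
  set b : ℝ := (y' 0 - y 0) / (2 * y' 0) with hb
  have ha0 : 0 ≤ a := by rw [ha]; positivity
  have hb0 : 0 ≤ b := by
    rw [hb]; apply div_nonneg (by linarith) (by linarith)
  have hab : a + b = 1 := by
    rw [ha, hb]; field_simp; ring
  have hdecomp : y = a • y' + b • flip y' := by
    ext i
    fin_cases i
    · show y 0 = a * y' 0 + b * (-(y' 0))
      rw [ha, hb]; field_simp; ring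
    · show y 1 = a * y' 1 + b * (y' 1)
      rw [h1]; linear_combination (-(y' 1)) * hab
    · show y 2 = a * y' 2 + b * (y' 2)
      rw [h2]; linear_combination (-(y' 2)) * hab
  calc gauge Cset y = gauge Cset (a • y' + b • flip y') := by rw [← hdecomp]
    _ ≤ gauge Cset (a • y') + gauge Cset (b • flip y') :=
        gauge_add_le hC_convex hC_absorbent _ _
    _ = a * gauge Cset y' + b * gauge Cset (flip y') := by
        rw [gauge_smul_of_nonneg ha0, gauge_smul_of_nonneg hb0]; simp [smul_eq_mul]
    _ = a * gauge Cset y' + b * gauge Cset y' := by rw [gauge_flip]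
    _ = gauge Cset y' := by rw [← add_mul, hab, one_mul]

end Stmt5Aux

/-- The norm `ϱ` satisfies `(|r|+|s|)/2 ≤ ϱ(r,s,t) ≤ max{|r|,|s|,|t|}` and
`ϱ(r',s,t) ≥ ϱ(r,s,t) + (r'−r)/4` for `r,s,t > 0`, `0 < r < r'`. -/
theorem stmt5 :
    (∀ v : EuclideanSpace ℝ (Fin 3),
      (|v 0| + |v 1|) / 2 ≤ rho v ∧ rho v ≤ max (max |v 0| |v 1|) |v 2|)
    ∧ (∀ r r' s t : ℝ, 0 < r → r < r' → 0 < s → 0 < t →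
        rho (WithLp.toLp 2 ![r, s, t] : EuclideanSpace ℝ (Fin 3)) + (r' - r) / 4
          ≤ rho (WithLp.toLp 2 ![r', s, t] : EuclideanSpace ℝ (Fin 3))) := by
  constructor
  · intro v
    have hlow := Stmt5Aux.gauge_lower v
    have hup := Stmt5Aux.gauge_upper v
    rw [← Stmt5Aux.rho0_eq] at hlow hup
    constructor
    · rw [rho]; linarith
    · rw [rho]
      have h0 : |v 0| ≤ max (max |v 0| |v 1|) |v 2| :=
        le_trans (le_max_left _ _) (le_max_left _ _)
      have h1 : |v 1| ≤ max (max |v 0| |v 1|) |v 2| :=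
        le_trans (le_max_right _ _) (le_max_left _ _)
      linarith
  · intro r r' s t hr hrr hs ht
    have hmono := Stmt5Aux.gauge_C_mono (WithLp.toLp 2 ![r, s, t] : EuclideanSpace ℝ (Fin 3))
      (WithLp.toLp 2 ![r', s, t] : EuclideanSpace ℝ (Fin 3)) rfl rfl hr hrr
    rw [← Stmt5Aux.rho0_eq, ← Stmt5Aux.rho0_eq] at hmono
    have e0 : (WithLp.toLp 2 ![r, s, t] : EuclideanSpace ℝ (Fin 3)) 0 = r := rfl
    have e1 : (WithLp.toLp 2 ![r, s, t] : EuclideanSpace ℝ (Fin 3)) 1 = s := rfl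
    have e0' : (WithLp.toLp 2 ![r', s, t] : EuclideanSpace ℝ (Fin 3)) 0 = r' := rfl
    have e1' : (WithLp.toLp 2 ![r', s, t] : EuclideanSpace ℝ (Fin 3)) 1 = s := rfl
    rw [rho, rho, e0, e1, e0', e1', abs_of_pos hr, abs_of_pos (lt_trans hr hrr),
      abs_of_pos hs]
    linarith
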